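/- Super semigroup law for the exponentials generated by a supersymmetry. Let A be a complete normed algebra over ℂ and let q, θ, η ∈ A satisfy the Grassmann relations θ² = 0, η² = 0, θη = −ηθ, θq = −qθ, ηq = −qη. Then for all real numbers t and s one has exp(−t·q² + θ*q) * exp(−s·q² + η*q) = exp(−(t+s)·q² − θ*η*q² + (θ+η)*q). In other words, the assignment (t,θ) ↦ e^{−t q² + θ q} carries the super semigroup multiplication (t,θ)·(s,η) = (t+s+θη, θ+η) of ℝ^{1|1}_{≥0} to multiplication in A. -/

import Mathlib

open NormedSpace in
lemma exp_of_sq_zero {A : Type*} [NormedRing A] [NormedAlgebra ℂ A] [CompleteSpace A]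
    (x : A) (hx : x ^ 2 = 0) : NormedSpace.exp x = 1 + x := by
  rw [NormedSpace.exp_eq_tsum ℂ]
  have h : ∀ n ∉ Finset.range 2, ((n.factorial : ℂ)⁻¹) • x ^ n = 0 := by
    intro n hn
    simp only [Finset.mem_range, not_lt] at hn
    have : x ^ n = 0 := by
      calc x ^ n = x ^ 2 * x ^ (n - 2) := by rw [← pow_add]; congr 1; omega
        _ = 0 := by rw [hx, zero_mul]
    simp [this]
  simp only []
  rw [tsum_eq_sum h]
  simp [Finset.sum_range_succ]

theorem super_semigroup_exp
    {A : Type*} [NormedRing A] [NormedAlgebra ℂ A] [CompleteSpace A]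
    (q θ η : A)
    (hθ2 : θ ^ 2 = 0) (hη2 : η ^ 2 = 0)
    (hθη : θ * η = -(η * θ))
    (hθq : θ * q = -(q * θ)) (hηq : η * q = -(q * η))
    (t s : ℝ) :
    NormedSpace.exp ((-(t : ℂ)) • q ^ 2 + θ * q) *
        NormedSpace.exp ((-(s : ℂ)) • q ^ 2 + η * q)
      = NormedSpace.exp ((-((t : ℂ) + (s : ℂ))) • q ^ 2 - θ * η * q ^ 2 + (θ + η) * q) := by
  letI : NormedAlgebra ℚ A := NormedAlgebra.restrictScalars ℚ ℂ A
  -- normalization rules: move `q` to the right, `θ` before `η`, kill squares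
  have n1 : q * θ = -(θ * q) := by rw [hθq, neg_neg]
  have n1' : ∀ x : A, q * (θ * x) = -(θ * (q * x)) := fun x => by
    rw [← mul_assoc, n1, neg_mul, mul_assoc]
  have n2 : q * η = -(η * q) := by rw [hηq, neg_neg]
  have n2' : ∀ x : A, q * (η * x) = -(η * (q * x)) := fun x => by
    rw [← mul_assoc, n2, neg_mul, mul_assoc]
  have n3 : η * θ = -(θ * η) := by rw [hθη, neg_neg]
  have n3' : ∀ x : A, η * (θ * x) = -(θ * (η * x)) := fun x => by
    rw [← mul_assoc, n3, neg_mul, mul_assoc]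
  have n4 : θ * θ = 0 := by simpa [sq] using hθ2
  have n4' : ∀ x : A, θ * (θ * x) = 0 := fun x => by rw [← mul_assoc, n4, zero_mul]
  have n5 : η * η = 0 := by simpa [sq] using hη2
  have n5' : ∀ x : A, η * (η * x) = 0 := fun x => by rw [← mul_assoc, n5, zero_mul]
  -- commutation facts
  have cθ : Commute (θ * q) (q ^ 2) := by
    show θ * q * q ^ 2 = q ^ 2 * (θ * q)
    simp only [sq, mul_assoc, n1, n1', n2, n2', n3, n3', n4, n4', n5, n5', mul_neg, neg_mul,
      neg_neg, mul_zero, zero_mul, neg_zero]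
  have cη : Commute (η * q) (q ^ 2) := by
    show η * q * q ^ 2 = q ^ 2 * (η * q)
    simp only [sq, mul_assoc, n1, n1', n2, n2', n3, n3', n4, n4', n5, n5', mul_neg, neg_mul,
      neg_neg, mul_zero, zero_mul, neg_zero]
  set v : A := -(θ * η * q ^ 2) + (θ + η) * q with hv
  have cv : Commute v (q ^ 2) := by
    show v * q ^ 2 = q ^ 2 * v
    simp only [hv, sq, mul_assoc, mul_add, add_mul, mul_neg, neg_mul, n1, n1', n2, n2', n3, n3',
      n4, n4', n5, n5', neg_neg, mul_zero, zero_mul, neg_zero, add_zero, zero_add]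
  -- nilpotency facts
  have hθqsq : (θ * q) ^ 2 = 0 := by
    simp only [sq, mul_assoc, n1, n1', n2, n2', n3, n3', n4, n4', n5, n5', mul_neg, neg_mul,
      neg_neg, mul_zero, zero_mul, neg_zero]
  have hηqsq : (η * q) ^ 2 = 0 := by
    simp only [sq, mul_assoc, n1, n1', n2, n2', n3, n3', n4, n4', n5, n5', mul_neg, neg_mul,
      neg_neg, mul_zero, zero_mul, neg_zero]
  have hvsq : v ^ 2 = 0 := by
    simp only [hv, sq, mul_assoc, mul_add, add_mul, mul_neg, neg_mul, n1, n1', n2, n2', n3, n3',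
      n4, n4', n5, n5', neg_neg, mul_zero, zero_mul, neg_zero, add_zero, zero_add,
      neg_add_cancel, add_neg_cancel]
  -- split the exponentials
  have hA : NormedSpace.exp ((-(t : ℂ)) • q ^ 2 + θ * q)
      = NormedSpace.exp ((-(t : ℂ)) • q ^ 2) * (1 + θ * q) := by
    rw [NormedSpace.exp_add_of_commute ((cθ.symm).smul_left _), exp_of_sq_zero _ hθqsq]
  have hB : NormedSpace.exp ((-(s : ℂ)) • q ^ 2 + η * q)
      = NormedSpace.exp ((-(s : ℂ)) • q ^ 2) * (1 + η * q) := by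
    rw [NormedSpace.exp_add_of_commute ((cη.symm).smul_left _), exp_of_sq_zero _ hηqsq]
  have hC : (-((t : ℂ) + (s : ℂ))) • q ^ 2 - θ * η * q ^ 2 + (θ + η) * q
      = (-((t : ℂ) + (s : ℂ))) • q ^ 2 + v := by
    rw [hv, sub_eq_add_neg, add_assoc]
  have hR : NormedSpace.exp ((-((t : ℂ) + (s : ℂ))) • q ^ 2 - θ * η * q ^ 2 + (θ + η) * q)
      = NormedSpace.exp ((-((t : ℂ) + (s : ℂ))) • q ^ 2) * (1 + v) := by
    rw [hC, NormedSpace.exp_add_of_commute ((cv.symm).smul_left _), exp_of_sq_zero _ hvsq]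
  -- (1 + θq) commutes with exp(-s • q²)
  have hcomm : Commute (1 + θ * q) (NormedSpace.exp ((-(s : ℂ)) • q ^ 2)) :=
    ((Commute.one_left _).add_left ((cθ.smul_right _).exp_right))
  -- combine the two scalar exponentials
  have hexp : NormedSpace.exp ((-(t : ℂ)) • q ^ 2) * NormedSpace.exp ((-(s : ℂ)) • q ^ 2)
      = NormedSpace.exp ((-((t : ℂ) + (s : ℂ))) • q ^ 2) := by
    rw [← NormedSpace.exp_add_of_commute (((Commute.refl (q ^ 2)).smul_left _).smul_right _),
      ← add_smul, neg_add]
  have hprod : (1 + θ * q) * (1 + η * q) = 1 + v := by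
    simp only [hv, sq, mul_add, add_mul, mul_one, one_mul, mul_assoc, mul_neg, neg_mul, n1, n1',
      n2, n2', n3, n3', n4, n4', n5, n5', neg_neg, mul_zero, zero_mul, neg_zero, add_zero,
      zero_add]
    abel
  calc NormedSpace.exp ((-(t : ℂ)) • q ^ 2 + θ * q) *
        NormedSpace.exp ((-(s : ℂ)) • q ^ 2 + η * q)
      = NormedSpace.exp ((-(t : ℂ)) • q ^ 2) *
          ((1 + θ * q) * NormedSpace.exp ((-(s : ℂ)) • q ^ 2)) * (1 + η * q) := by
        rw [hA, hB]; noncomm_ring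
    _ = NormedSpace.exp ((-(t : ℂ)) • q ^ 2) *
          (NormedSpace.exp ((-(s : ℂ)) • q ^ 2) * (1 + θ * q)) * (1 + η * q) := by
        rw [hcomm.eq]
    _ = NormedSpace.exp ((-((t : ℂ) + (s : ℂ))) • q ^ 2) * ((1 + θ * q) * (1 + η * q)) := by
        rw [← hexp]; noncomm_ring
    _ = NormedSpace.exp ((-((t : ℂ) + (s : ℂ))) • q ^ 2) * (1 + v) := by rw [hprod]
    _ = _ := by rw [hR]
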